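/- In a finite-horizon undiscounted MDP, the ℓ1 distance between step-h state-action visitation distributions of two policies π and π' satisfies ||d^π_h - d^{π'}_h||_1 ≤ 2 Σ_{i=1}^{h} E_{s∼ν^π_i}[ D_TV(π_i(·|s), π'_i(·|s)) ] for all h ∈ [H]. -/

import Mathlib

/-- the ℓ1 distance between step-h state-action visitation
distributions is bounded by twice the cumulative expected TV distance up to step h. -/
theorem stmt_5 {S A : Type*} [Fintype S] [Fintype A] (H : ℕ)
    (P : ℕ → S → A → S → ℝ) (π π' : ℕ → S → A → ℝ)
    (ν1 : S → ℝ) (ν ν' : ℕ → S → ℝ)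
    (hPnn : ∀ h s a s', 0 ≤ P h s a s') (hPsum : ∀ h s a, ∑ s', P h s a s' = 1)
    (hπnn : ∀ h s a, 0 ≤ π h s a) (hπsum : ∀ h s, ∑ a, π h s a = 1)
    (hπ'nn : ∀ h s a, 0 ≤ π' h s a) (hπ'sum : ∀ h s, ∑ a, π' h s a = 1)
    (hν1nn : ∀ s, 0 ≤ ν1 s) (hν1sum : ∑ s, ν1 s = 1)
    (hν1 : ν 1 = ν1) (hν'1 : ν' 1 = ν1)
    (hνrec : ∀ h s', ν (h + 1) s' = ∑ s, ∑ a, P h s a s' * π h s a * ν h s)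
    (hν'rec : ∀ h s', ν' (h + 1) s' = ∑ s, ∑ a, P h s a s' * π' h s a * ν' h s) :
    ∀ h, 1 ≤ h → h ≤ H →
      ∑ s, ∑ a, |ν h s * π h s a - ν' h s * π' h s a| ≤
        2 * ∑ i ∈ Finset.Icc 1 h,
              ∑ s, ν i s * ((1 / 2) * ∑ a, |π i s a - π' i s a|) := by
  -- nonnegativity of ν h for h ≥ 1
  have hνnn : ∀ h, 1 ≤ h → ∀ s, 0 ≤ ν h s := by
    intro h hh
    induction h, hh using Nat.le_induction with
    | base => intro s; rw [hν1]; exact hν1nn s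
    | succ n hn ih =>
      intro s'
      rw [hνrec]
      refine Finset.sum_nonneg fun s _ => Finset.sum_nonneg fun a _ => ?_
      exact mul_nonneg (mul_nonneg (hPnn _ _ _ _) (hπnn _ _ _)) (ih s)
  -- key pointwise bound: |d - d'| summed over a
  have hA : ∀ h, 1 ≤ h →
      ∑ s, ∑ a, |ν h s * π h s a - ν' h s * π' h s a| ≤
        (∑ s, |ν h s - ν' h s|) + ∑ s, ν h s * ∑ a, |π h s a - π' h s a| := by
    intro h hh
    have : ∀ s, ∑ a, |ν h s * π h s a - ν' h s * π' h s a| ≤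
        |ν h s - ν' h s| + ν h s * ∑ a, |π h s a - π' h s a| := by
      intro s
      have step : ∀ a, |ν h s * π h s a - ν' h s * π' h s a| ≤
          ν h s * |π h s a - π' h s a| + |ν h s - ν' h s| * π' h s a := by
        intro a
        have : ν h s * π h s a - ν' h s * π' h s a =
            ν h s * (π h s a - π' h s a) + (ν h s - ν' h s) * π' h s a := by ring
        rw [this]
        calc |ν h s * (π h s a - π' h s a) + (ν h s - ν' h s) * π' h s a|
            ≤ |ν h s * (π h s a - π' h s a)| + |(ν h s - ν' h s) * π' h s a| := abs_add_le _ _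
          _ = ν h s * |π h s a - π' h s a| + |ν h s - ν' h s| * π' h s a := by
              rw [abs_mul, abs_mul, abs_of_nonneg (hνnn h hh s),
                abs_of_nonneg (hπ'nn h s a)]
      calc ∑ a, |ν h s * π h s a - ν' h s * π' h s a|
          ≤ ∑ a, (ν h s * |π h s a - π' h s a| + |ν h s - ν' h s| * π' h s a) :=
            Finset.sum_le_sum fun a _ => step a
        _ = ν h s * ∑ a, |π h s a - π' h s a| + |ν h s - ν' h s| := by
            rw [Finset.sum_add_distrib, ← Finset.mul_sum, ← Finset.mul_sum, hπ'sum, mul_one]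
        _ = |ν h s - ν' h s| + ν h s * ∑ a, |π h s a - π' h s a| := by ring
    calc ∑ s, ∑ a, |ν h s * π h s a - ν' h s * π' h s a|
        ≤ ∑ s, (|ν h s - ν' h s| + ν h s * ∑ a, |π h s a - π' h s a|) :=
          Finset.sum_le_sum fun s _ => this s
      _ = (∑ s, |ν h s - ν' h s|) + ∑ s, ν h s * ∑ a, |π h s a - π' h s a| :=
          Finset.sum_add_distrib
  -- contraction step
  have hB : ∀ h, ∑ s', |ν (h + 1) s' - ν' (h + 1) s'| ≤
      ∑ s, ∑ a, |ν h s * π h s a - ν' h s * π' h s a| := by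
    intro h
    have hpt : ∀ s', |ν (h + 1) s' - ν' (h + 1) s'| ≤
        ∑ s, ∑ a, P h s a s' * |ν h s * π h s a - ν' h s * π' h s a| := by
      intro s'
      rw [hνrec, hν'rec, ← Finset.sum_sub_distrib]
      calc |∑ s, ((∑ a, P h s a s' * π h s a * ν h s) - ∑ a, P h s a s' * π' h s a * ν' h s)|
          ≤ ∑ s, |(∑ a, P h s a s' * π h s a * ν h s) - ∑ a, P h s a s' * π' h s a * ν' h s| :=
            Finset.abs_sum_le_sum_abs _ _
        _ ≤ ∑ s, ∑ a, P h s a s' * |ν h s * π h s a - ν' h s * π' h s a| := by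
            refine Finset.sum_le_sum fun s _ => ?_
            rw [← Finset.sum_sub_distrib]
            refine le_trans (Finset.abs_sum_le_sum_abs _ _)
              (Finset.sum_le_sum fun a _ => ?_)
            have : P h s a s' * π h s a * ν h s - P h s a s' * π' h s a * ν' h s =
                P h s a s' * (ν h s * π h s a - ν' h s * π' h s a) := by ring
            rw [this, abs_mul, abs_of_nonneg (hPnn _ _ _ _)]
    calc ∑ s', |ν (h + 1) s' - ν' (h + 1) s'|
        ≤ ∑ s', ∑ s, ∑ a, P h s a s' * |ν h s * π h s a - ν' h s * π' h s a| :=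
          Finset.sum_le_sum fun s' _ => hpt s'
      _ = ∑ s, ∑ a, (∑ s', P h s a s') * |ν h s * π h s a - ν' h s * π' h s a| := by
          rw [Finset.sum_comm]
          refine Finset.sum_congr rfl fun s _ => ?_
          rw [Finset.sum_comm]
          refine Finset.sum_congr rfl fun a _ => ?_
          rw [Finset.sum_mul]
      _ = ∑ s, ∑ a, |ν h s * π h s a - ν' h s * π' h s a| := by
          refine Finset.sum_congr rfl fun s _ => Finset.sum_congr rfl fun a _ => ?_
          rw [hPsum, one_mul]
  -- main induction: state distance bound
  have hkey : ∀ h, 1 ≤ h → ∑ s, |ν h s - ν' h s| ≤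
      2 * ∑ i ∈ Finset.Ico 1 h, ∑ s, ν i s * ((1 / 2) * ∑ a, |π i s a - π' i s a|) := by
    intro h hh
    induction h, hh using Nat.le_induction with
    | base =>
      simp [hν1, hν'1]
    | succ n hn ih =>
      have step := le_trans (hB n) (le_trans (hA n hn) (add_le_add ih le_rfl))
      calc ∑ s', |ν (n + 1) s' - ν' (n + 1) s'|
          ≤ 2 * (∑ i ∈ Finset.Ico 1 n, ∑ s, ν i s * ((1 / 2) * ∑ a, |π i s a - π' i s a|))
              + ∑ s, ν n s * ∑ a, |π n s a - π' n s a| := step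
        _ = 2 * ∑ i ∈ Finset.Ico 1 (n + 1),
              ∑ s, ν i s * ((1 / 2) * ∑ a, |π i s a - π' i s a|) := by
            rw [Finset.sum_Ico_succ_top hn, mul_add]
            congr 1
            rw [Finset.mul_sum]
            exact Finset.sum_congr rfl fun s _ => by ring
  intro h hh _
  have := le_trans (hA h hh) (add_le_add (hkey h hh) le_rfl)
  calc ∑ s, ∑ a, |ν h s * π h s a - ν' h s * π' h s a|
      ≤ 2 * (∑ i ∈ Finset.Ico 1 h, ∑ s, ν i s * ((1 / 2) * ∑ a, |π i s a - π' i s a|))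
          + ∑ s, ν h s * ∑ a, |π h s a - π' h s a| := this
    _ = 2 * ∑ i ∈ Finset.Icc 1 h,
          ∑ s, ν i s * ((1 / 2) * ∑ a, |π i s a - π' i s a|) := by
        rw [show Finset.Icc 1 h = Finset.Ico 1 (h + 1) by
          rw [Finset.Ico_add_one_right_eq_Icc], Finset.sum_Ico_succ_top hh, mul_add]
        congr 1
        rw [Finset.mul_sum]
        exact Finset.sum_congr rfl fun s _ => by ring
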